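/- arXiv:1304.5999 — 2 statements merged into one kernel-verified Lean document; each statement's English description precedes it below -/
import Mathlib

section
/- Let $\mathscr{D}$ be the standard dyadic grid in $\mathbb{R}^n$, let $\sigma_1,\dots,\sigma_m$ be weights (nonnegative locally integrable functions), and let $1<p_1,\dots,p_m<\infty$ with $\frac1p=\frac1{p_1}+\dots+\frac1{p_m}$ and $p\in(1,\infty)$. Suppose the nonnegative numbers $\{a_Q\}_{Q\in\mathscr{D}}$ satisfy the Carleson condition $\sum_{Q\subset R} a_Q \le A\int_R \prod_{i=1}^m \sigma_i^{p/p_i}\,dx$ for every $R\in\mathscr{D}$. Then for all nonnegative $f_i\in L^{p_i}(\sigma_i)$, $\Big(\sum_{Q\in\mathscr{D}} a_Q \prod_{i=1}^m\Big(\frac{1}{\sigma_i(Q)}\int_Q f_i\sigma_i\Big)^p\Big)^{1/p} \le A^{1/p}\,\|\mathcal{M}^d_{\vec\sigma}(\vec f)\|_{L^p(\prod_i\sigma_i^{p/p_i})}$, where $\mathcal{M}^d_{\vec\sigma}(\vec f)(x)=\sup_{Q\ni x,\,Q\in\mathscr{D}}\prod_{i=1}^m\frac{1}{\sigma_i(Q)}\int_Q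 |f_i|\sigma_i$. -/
open MeasureTheory ENNReal

noncomputable section

/-- Points of `ℝⁿ`. -/
abbrev Rn (n : ℕ) := Fin n → ℝ

/-- The half-open cube with corner `c` and sidelength `h`. -/
def cube {n : ℕ} (c : Rn n) (h : ℝ) : Set (Rn n) :=
  Set.univ.pi fun i => Set.Ico (c i) (c i + h)

/-- `Q` is a (half-open, axis-parallel) cube. -/
def IsCube {n : ℕ} (Q : Set (Rn n)) : Prop := ∃ c h, 0 < h ∧ Q = cube c h

/-- The dyadic cube `2^{-k}([0,1)^n + j)` of the standard dyadic grid. -/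
def dyadicCube {n : ℕ} (k : ℤ) (j : Fin n → ℤ) : Set (Rn n) :=
  cube (fun i => (j i : ℝ) * (2:ℝ) ^ (-k)) ((2:ℝ) ^ (-k))

/-- `Q` belongs to the standard dyadic grid `𝒟`. -/
def IsDyadicCube {n : ℕ} (Q : Set (Rn n)) : Prop := ∃ k j, Q = dyadicCube k j

/-- `∫_Q g` of a (nonnegative) real function, as an element of `ℝ≥0∞`. -/
def setInt {n : ℕ} (Q : Set (Rn n)) (g : Rn n → ℝ) : ℝ≥0∞ :=
  ∫⁻ x in Q, ENNReal.ofReal (g x)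

/-- The average `(1/|Q|)∫_Q g`. -/
def avg {n : ℕ} (Q : Set (Rn n)) (g : Rn n → ℝ) : ℝ≥0∞ := setInt Q g / volume Q

/-- The weighted average `(1/σ(Q)) ∫_Q f σ`. -/
def wAvg {n : ℕ} (Q : Set (Rn n)) (σ f : Rn n → ℝ) : ℝ≥0∞ :=
  setInt Q (fun x => f x * σ x) / setInt Q σ

/-- The dyadic weighted multisublinear maximal operator `𝓜^d_{⃗σ}`. -/
def Mdw {n m : ℕ} (σ f : Fin m → Rn n → ℝ) (x : Rn n) : ℝ≥0∞ :=
  ⨆ (Q : Set (Rn n)) (_ : IsDyadicCube Q) (_ : x ∈ Q), ∏ i, wAvg Q (σ i) (f i)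

/-- The dyadic weighted maximal operator `M^d_σ`. -/
def Mdw1 {n : ℕ} (σ f : Rn n → ℝ) (x : Rn n) : ℝ≥0∞ :=
  ⨆ (Q : Set (Rn n)) (_ : IsDyadicCube Q) (_ : x ∈ Q), wAvg Q σ f

/-- The multisublinear maximal operator `𝓜` over all cubes. -/
def MM {n m : ℕ} (f : Fin m → Rn n → ℝ) (x : Rn n) : ℝ≥0∞ :=
  ⨆ (Q : Set (Rn n)) (_ : IsCube Q) (_ : x ∈ Q), ∏ i, avg Q (f i)

/-- The dyadic multisublinear maximal operator `𝓜^d`. -/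
def MMd {n m : ℕ} (f : Fin m → Rn n → ℝ) (x : Rn n) : ℝ≥0∞ :=
  ⨆ (Q : Set (Rn n)) (_ : IsDyadicCube Q) (_ : x ∈ Q), ∏ i, avg Q (f i)

/-- The Hardy–Littlewood maximal operator (over all cubes). -/
def HLM {n : ℕ} (g : Rn n → ℝ) (x : Rn n) : ℝ≥0∞ :=
  ⨆ (Q : Set (Rn n)) (_ : IsCube Q) (_ : x ∈ Q), avg Q g

/-- `(∫ g^p v dx)^{1/p}` for an `ℝ≥0∞`-valued `g`. -/
def nLp {n : ℕ} (p : ℝ) (v : Rn n → ℝ) (g : Rn n → ℝ≥0∞) : ℝ≥0∞ :=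
  (∫⁻ x, g x ^ p * ENNReal.ofReal (v x)) ^ (1/p)

/-- The `L^p(v)` norm of a (nonnegative) real function. -/
def nLpR {n : ℕ} (p : ℝ) (v f : Rn n → ℝ) : ℝ≥0∞ :=
  nLp p v (fun x => ENNReal.ofReal (f x))

/-- The conjugate exponent `q' = q/(q-1)`. -/
def conjExp (q : ℝ) : ℝ := q / (q - 1)

/-- The dual weights `σ_i = w_i^{1-p_i'}`. -/
def dualW {n m : ℕ} (p : Fin m → ℝ) (w : Fin m → Rn n → ℝ) : Fin m → Rn n → ℝ :=
  fun i x => w i x ^ (1 - conjExp (p i))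

/-- The geometric average `exp((1/|Q|)∫_Q log g)`, realized (in the extended sense)
as `inf_{r>0} ((1/|Q|)∫_Q g^r)^{1/r}`. -/
def expLogAvg {n : ℕ} (Q : Set (Rn n)) (g : Rn n → ℝ) : ℝ≥0∞ :=
  ⨅ (r : ℝ) (_ : 0 < r), ((∫⁻ x in Q, ENNReal.ofReal (g x) ^ r) / volume Q) ^ (1/r)

/-- A sparse family of cubes indexed by `ℤ × J`. -/
def IsSparse {n : ℕ} (J : Type) (Q : ℤ → J → Set (Rn n)) : Prop :=
  (∀ (k : ℤ) (j j' : J), j ≠ j' → Q k j ∩ Q k j' = ∅) ∧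
  (∀ k : ℤ, (⋃ j, Q (k+1) j) ⊆ ⋃ j, Q k j) ∧
  (∀ (k : ℤ) (j : J), volume ((⋃ j', Q (k+1) j') ∩ Q k j) ≤ volume (Q k j) / 2)

/-- A general dyadic grid. -/
def IsDyadicGrid {n : ℕ} (G : Set (Set (Rn n))) : Prop :=
  (∀ Q ∈ G, ∃ (k : ℤ) (c : Rn n), Q = cube c ((2:ℝ) ^ k)) ∧
  (∀ Q ∈ G, ∀ R ∈ G, Q ∩ R = Q ∨ Q ∩ R = R ∨ Q ∩ R = ∅) ∧
  (∀ k : ℤ,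
    ⋃₀ {Q | Q ∈ G ∧ ∃ c, Q = cube c ((2:ℝ) ^ k)} = Set.univ ∧
    {Q | Q ∈ G ∧ ∃ c, Q = cube c ((2:ℝ) ^ k)}.Pairwise fun Q R => Q ∩ R = ∅)
section Aux

variable {n m : ℕ}

lemma measurableSet_cube (c : Rn n) (h : ℝ) : MeasurableSet (cube c h) :=
  MeasurableSet.univ_pi fun _ => measurableSet_Ico

lemma mem_cube {c : Rn n} {h : ℝ} {x : Rn n} :
    x ∈ cube c h ↔ ∀ i, c i ≤ x i ∧ x i < c i + h := by
  simp [cube, Set.mem_pi, Set.mem_Ico]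

lemma corner_mem_cube {c : Rn n} {h : ℝ} (hh : 0 < h) : c ∈ cube c h :=
  mem_cube.2 fun _ => ⟨le_rfl, by linarith⟩

lemma IsDyadicCube.measurableSet {Q : Set (Rn n)} (hQ : IsDyadicCube Q) :
    MeasurableSet Q := by
  obtain ⟨k, j, rfl⟩ := hQ; exact measurableSet_cube _ _

lemma IsDyadicCube.nonempty {Q : Set (Rn n)} (hQ : IsDyadicCube Q) : Q.Nonempty := by
  obtain ⟨k, j, rfl⟩ := hQ
  exact ⟨_, corner_mem_cube (by positivity)⟩

lemma mem_dyadicCube {k : ℤ} {j : Fin n → ℤ} {x : Rn n} :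
    x ∈ dyadicCube k j ↔
      ∀ i, (j i : ℝ) * (2:ℝ) ^ (-k) ≤ x i ∧ x i < (j i : ℝ) * (2:ℝ) ^ (-k) + (2:ℝ) ^ (-k) :=
  mem_cube

lemma dyadicCube_subset {k k' : ℤ} {j j' : Fin n → ℤ} (hk : k' ≤ k)
    (hne : (dyadicCube k j ∩ dyadicCube k' j' : Set (Rn n)).Nonempty) :
    dyadicCube k j ⊆ dyadicCube k' j' := by
  obtain ⟨x, hxQ, hxR⟩ := hne
  set e : ℝ := (2:ℝ) ^ (-k) with hedef
  have he : (0:ℝ) < e := by positivity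
  set d : ℕ := (k - k').toNat with hd
  have hE : (2:ℝ) ^ (-k') = ((2:ℝ) ^ d) * e := by
    rw [hedef, ← zpow_natCast (2:ℝ) d, ← zpow_add₀ (two_ne_zero), hd,
      Int.toNat_of_nonneg (by linarith)]
    congr 1; ring
  -- integer comparison helpers
  have int_le : ∀ a b : ℤ, (a:ℝ) * e < (b:ℝ) * e + e → (a:ℝ) * e ≤ (b:ℝ) * e := by
    intro a b hab
    have h1 : (a:ℝ) * e < ((b:ℝ) + 1) * e := by ring_nf; ring_nf at hab; linarith
    have h2 : (a:ℝ) < (b:ℝ) + 1 := lt_of_mul_lt_mul_right h1 he.le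
    have h3 : a ≤ b := by exact_mod_cast Int.lt_add_one_iff.mp (by exact_mod_cast h2)
    exact mul_le_mul_of_nonneg_right (by exact_mod_cast h3) he.le
  have hcast : ∀ a : ℤ, (a:ℝ) * (2:ℝ) ^ (-k') = ((a * 2 ^ d : ℤ) : ℝ) * e := by
    intro a; rw [hE]; push_cast; ring
  intro y hy
  have hQ := mem_dyadicCube.1 hxQ
  have hR := mem_dyadicCube.1 hxR
  have hyQ := mem_dyadicCube.1 hy
  refine mem_dyadicCube.2 fun i => ?_
  obtain ⟨h1, h2⟩ := hQ i
  obtain ⟨h3, h4⟩ := hR i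
  obtain ⟨h5, h6⟩ := hyQ i
  set w : ℤ := j' i * 2 ^ d with hw
  have hcorner : ((j' i : ℝ)) * (2:ℝ) ^ (-k') = (w:ℝ) * e := hcast (j' i)
  rw [hcorner] at h3 h4 ⊢
  rw [hE] at h4 ⊢
  -- A1 : w * e ≤ j i * e
  have hA1 : (w:ℝ) * e ≤ (j i : ℝ) * e := int_le w (j i) (lt_of_le_of_lt h3 h2)
  -- A2 : j i * e + e ≤ w * e + 2^d * e
  have hwd : (w:ℝ) * e + (2:ℝ) ^ d * e = ((w + 2 ^ d : ℤ) : ℝ) * e := by push_cast; ring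
  have hA2 : (j i : ℝ) * e + e ≤ (w:ℝ) * e + (2:ℝ) ^ d * e := by
    have hlt : (j i : ℝ) * e < ((w + 2 ^ d : ℤ) : ℝ) * e := by
      rw [← hwd]; exact lt_of_le_of_lt h1 h4
    have h2' : (j i : ℝ) < ((w + 2 ^ d : ℤ) : ℝ) := lt_of_mul_lt_mul_right hlt he.le
    have h3' : j i + 1 ≤ w + 2 ^ d := by exact_mod_cast Int.lt_iff_add_one_le.mp (by exact_mod_cast h2')
    have := mul_le_mul_of_nonneg_right (show ((j i + 1 : ℤ) : ℝ) ≤ ((w + 2 ^ d : ℤ) : ℝ) by exact_mod_cast h3') he.le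
    push_cast at this; linarith
  constructor
  · linarith
  · linarith

lemma dyadic_nested_or_disjoint {Q R : Set (Rn n)} (hQ : IsDyadicCube Q) (hR : IsDyadicCube R) :
    Q ⊆ R ∨ R ⊆ Q ∨ Q ∩ R = ∅ := by
  obtain ⟨k, j, rfl⟩ := hQ
  obtain ⟨k', j', rfl⟩ := hR
  by_cases h : (dyadicCube k j ∩ dyadicCube k' j' : Set (Rn n)) = ∅
  · exact Or.inr (Or.inr h)
  · have hne := Set.nonempty_iff_ne_empty.2 h
    rcases le_total k' k with hk | hk
    · exact Or.inl (dyadicCube_subset hk hne)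
    · exact Or.inr (Or.inl (dyadicCube_subset hk (by rwa [Set.inter_comm] at hne)))

instance : Countable {Q : Set (Rn n) // IsDyadicCube Q} := by
  have hs : Function.Surjective (fun q : ℤ × (Fin n → ℤ) =>
      (⟨dyadicCube q.1 q.2, q.1, q.2, rfl⟩ : {Q : Set (Rn n) // IsDyadicCube Q})) := by
    rintro ⟨Q, k, j, rfl⟩; exact ⟨(k, j), rfl⟩
  exact hs.countable

lemma prod_wAvg_le_Mdw {σ f : Fin m → Rn n → ℝ} {Q : Set (Rn n)} (hQ : IsDyadicCube Q)
    {x : Rn n} (hx : x ∈ Q) : (∏ i, wAvg Q (σ i) (f i)) ≤ Mdw σ f x :=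
  le_iSup_of_le Q (le_iSup_of_le hQ (le_iSup_of_le hx le_rfl))

lemma measurable_Mdw (σ f : Fin m → Rn n → ℝ) : Measurable (Mdw σ f) := by
  have h : Mdw σ f = fun x => ⨆ q : ℤ × (Fin n → ℤ),
      (dyadicCube q.1 q.2).indicator
        (fun _ => ∏ i, wAvg (dyadicCube q.1 q.2) (σ i) (f i)) x := by
    funext x
    apply le_antisymm
    · refine iSup_le fun Q => iSup_le fun hQ => iSup_le fun hx => ?_
      obtain ⟨k, j, rfl⟩ := hQ
      exact le_iSup_of_le (k, j) (by rw [Set.indicator_of_mem hx])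
    · refine iSup_le fun q => ?_
      by_cases hx : x ∈ dyadicCube q.1 q.2
      · rw [Set.indicator_of_mem hx]
        exact le_iSup_of_le _ (le_iSup_of_le ⟨q.1, q.2, rfl⟩ (le_iSup_of_le hx le_rfl))
      · rw [Set.indicator_of_notMem hx]; exact zero_le
  rw [h]
  exact Measurable.iSup fun q =>
    Measurable.indicator measurable_const (measurableSet_cube _ _)

end Aux

lemma measurable_layer_set (c : ℝ≥0∞) : MeasurableSet {t : ℝ | ENNReal.ofReal t < c} :=
  ENNReal.measurable_ofReal measurableSet_Iio

lemma layer_pt {pp : ℝ} (hpp : 1 < pp) (c : ℝ≥0∞) :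
    ∫⁻ t in Set.Ioi (0:ℝ),
      ({t : ℝ | ENNReal.ofReal t < c}).indicator
        (fun t => ENNReal.ofReal (pp * t ^ (pp - 1))) t
      = c ^ pp := by
  have hppos : 0 < pp := by linarith
  have hgm : Measurable fun t : ℝ => ENNReal.ofReal (pp * t ^ (pp - 1)) :=
    (measurable_const.mul ((Real.continuous_rpow_const (by linarith)).measurable)).ennreal_ofReal
  rw [lintegral_indicator (measurable_layer_set c), Measure.restrict_restrict (measurable_layer_set c)]
  rcases eq_or_ne c 0 with rfl | hc0
  · have hS : {t : ℝ | ENNReal.ofReal t < 0} = ∅ := by simp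
    rw [hS, Set.empty_inter]
    simp [ENNReal.zero_rpow_of_pos hppos]
  rcases eq_or_ne c ⊤ with rfl | hctop
  · have hS : {t : ℝ | ENNReal.ofReal t < ⊤} = Set.univ := by
      ext t; simp
    rw [hS, Set.univ_inter, ENNReal.top_rpow_of_pos hppos]
    refine top_unique ?_
    calc (⊤:ℝ≥0∞) = ENNReal.ofReal pp * volume (Set.Ici (1:ℝ)) := by
          rw [Real.volume_Ici, ENNReal.mul_top (ENNReal.ofReal_pos.2 hppos).ne']
      _ = ∫⁻ _ in Set.Ici (1:ℝ), ENNReal.ofReal pp := by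
          rw [setLIntegral_const]
      _ ≤ ∫⁻ t in Set.Ici (1:ℝ), ENNReal.ofReal (pp * t ^ (pp - 1)) := by
          refine setLIntegral_mono hgm fun t ht => ?_
          refine ENNReal.ofReal_le_ofReal ?_
          have h1 : (1:ℝ) ≤ t ^ (pp - 1) := by
            calc (1:ℝ) = (1:ℝ) ^ (pp - 1) := (Real.one_rpow _).symm
              _ ≤ t ^ (pp - 1) := Real.rpow_le_rpow zero_le_one ht (by linarith)
          nlinarith
      _ ≤ ∫⁻ t in Set.Ioi (0:ℝ), ENNReal.ofReal (pp * t ^ (pp - 1)) :=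
          lintegral_mono_set (fun t ht => Set.mem_Ioi.2 (lt_of_lt_of_le one_pos ht))
  · set b : ℝ := c.toReal with hb
    have hbpos : 0 < b := ENNReal.toReal_pos hc0 hctop
    have hS : {t : ℝ | ENNReal.ofReal t < c} ∩ Set.Ioi (0:ℝ) = Set.Ioo 0 b := by
      ext t
      simp only [Set.mem_inter_iff, Set.mem_setOf_eq, Set.mem_Ioi, Set.mem_Ioo]
      constructor
      · rintro ⟨h1, h2⟩
        exact ⟨h2, (ENNReal.ofReal_lt_iff_lt_toReal h2.le hctop).1 h1⟩
      · rintro ⟨h1, h2⟩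
        exact ⟨(ENNReal.ofReal_lt_iff_lt_toReal h1.le hctop).2 h2, h1⟩
    rw [hS]
    have hint : IntegrableOn (fun t : ℝ => pp * t ^ (pp - 1)) (Set.Ioo 0 b) volume := by
      have h1 : IntervalIntegrable (fun t : ℝ => t ^ (pp - 1)) volume 0 b :=
        intervalIntegral.intervalIntegrable_rpow (Or.inl (by linarith))
      have h2 : IntegrableOn (fun t : ℝ => t ^ (pp - 1)) (Set.Ioc 0 b) volume := by
        rw [intervalIntegrable_iff_integrableOn_Ioc_of_le hbpos.le] at h1
        exact h1
      exact (h2.mono_set Set.Ioo_subset_Ioc_self).const_mul pp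
    have hnn : 0 ≤ᵐ[volume.restrict (Set.Ioo 0 b)] fun t : ℝ => pp * t ^ (pp - 1) := by
      refine (ae_restrict_iff' measurableSet_Ioo).2 (Filter.Eventually.of_forall fun t ht => ?_)
      exact mul_nonneg hppos.le (Real.rpow_nonneg ht.1.le _)
    rw [← ofReal_integral_eq_lintegral_ofReal hint hnn]
    have hval : ∫ t in Set.Ioo 0 b, pp * t ^ (pp - 1) = b ^ pp := by
      rw [← MeasureTheory.integral_Ioc_eq_integral_Ioo,
        ← intervalIntegral.integral_of_le hbpos.le,
        intervalIntegral.integral_const_mul,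
        integral_rpow (Or.inl (by linarith))]
      rw [Real.zero_rpow (by linarith), sub_add_cancel]
      field_simp
      rw [sub_zero]
    rw [hval]
    conv_rhs => rw [← ENNReal.ofReal_toReal hctop, ← hb, ENNReal.ofReal_rpow_of_pos hbpos]

section Level

variable {n m : ℕ}

lemma carleson_level (σ f : Fin m → Rn n → ℝ) (A : ℝ≥0∞) (v : Rn n → ℝ)
    (a : Set (Rn n) → ℝ≥0∞)
    (hCar : ∀ R : Set (Rn n), IsDyadicCube R →
      (∑' Q : {Q : Set (Rn n) // IsDyadicCube Q ∧ Q ⊆ R}, a Q.1) ≤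
        A * ∫⁻ x in R, ENNReal.ofReal (v x)) (s : ℝ≥0∞) :
    (∑' Q : {Q : Set (Rn n) // IsDyadicCube Q},
        (if s < ∏ i, wAvg Q.1 (σ i) (f i) then a Q.1 else 0)) ≤
      A * ∫⁻ x in {x | s < Mdw σ f x}, ENNReal.ofReal (v x) := by
  classical
  rw [ENNReal.tsum_eq_iSup_sum]
  refine iSup_le fun F => ?_
  rw [← Finset.sum_filter]
  set F' := F.filter (fun Q => s < ∏ i, wAvg Q.1 (σ i) (f i)) with hF'
  have hmemF' : ∀ Q ∈ F', s < ∏ i, wAvg Q.1 (σ i) (f i) :=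
    fun Q hQ => (Finset.mem_filter.1 hQ).2
  set Max := F'.filter (fun R => ∀ Q ∈ F', R.1 ⊆ Q.1 → Q.1 ⊆ R.1) with hMax
  have hMaxF' : ∀ R ∈ Max, R ∈ F' := fun R hR => (Finset.mem_filter.1 hR).1
  have hMaxP : ∀ R ∈ Max, ∀ Q ∈ F', R.1 ⊆ Q.1 → Q.1 ⊆ R.1 :=
    fun R hR => (Finset.mem_filter.1 hR).2
  have cover : ∀ Q ∈ F', ∃ R ∈ Max, Q.1 ⊆ R.1 := by
    intro Q hQ
    obtain ⟨R, hRS, hRmax⟩ := Finset.exists_maximal (s := F'.filter fun R => Q.1 ⊆ R.1)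
      ⟨Q, Finset.mem_filter.2 ⟨hQ, subset_rfl⟩⟩
    obtain ⟨hRF', hQR⟩ := Finset.mem_filter.1 hRS
    refine ⟨R, Finset.mem_filter.2 ⟨hRF', ?_⟩, hQR⟩
    intro Q' hQ' hRQ'
    by_contra hcon
    exact hcon (hRmax (Finset.mem_filter.2 ⟨hQ', hQR.trans hRQ'⟩) hRQ')
  -- the underlying sets of distinct maximal cubes are disjoint
  have hdisjsets : ∀ R ∈ Max, ∀ R' ∈ Max, R ≠ R' → R.1 ∩ R'.1 = ∅ := by
    intro R hR R' hR' hne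
    rcases dyadic_nested_or_disjoint R.2 R'.2 with h | h | h
    · exact absurd (Subtype.ext (le_antisymm h (hMaxP R hR R' (hMaxF' R' hR') h))) hne
    · exact absurd (Subtype.ext (le_antisymm (hMaxP R' hR' R (hMaxF' R hR) h) h).symm) hne.symm
    · exact h
  have hdisjfin : (↑Max : Set {Q : Set (Rn n) // IsDyadicCube Q}).PairwiseDisjoint
      (fun R : {Q : Set (Rn n) // IsDyadicCube Q} => F'.filter (fun Q => Q.1 ⊆ R.1)) := by
    intro R hR R' hR' hne
    simp only [Function.onFun]
    rw [Finset.disjoint_left]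
    intro Q hQ1 hQ2
    have h1 := (Finset.mem_filter.1 hQ1).2
    have h2 := (Finset.mem_filter.1 hQ2).2
    obtain ⟨x, hx⟩ := Q.2.nonempty
    have : x ∈ R.1 ∩ R'.1 := ⟨h1 hx, h2 hx⟩
    rw [hdisjsets R (Finset.mem_coe.1 hR) R' (Finset.mem_coe.1 hR') hne] at this
    exact this
  calc ∑ Q ∈ F', a Q.1
      ≤ ∑ Q ∈ Max.biUnion (fun R => F'.filter (fun Q => Q.1 ⊆ R.1)), a Q.1 := by
        refine Finset.sum_le_sum_of_subset fun Q hQ => ?_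
        rw [Finset.mem_biUnion]
        obtain ⟨R, hR, hsub⟩ := cover Q hQ
        exact ⟨R, hR, Finset.mem_filter.2 ⟨hQ, hsub⟩⟩
    _ = ∑ R ∈ Max, ∑ Q ∈ F'.filter (fun Q => Q.1 ⊆ R.1), a Q.1 :=
        Finset.sum_biUnion hdisjfin
    _ ≤ ∑ R ∈ Max, A * ∫⁻ x in R.1, ENNReal.ofReal (v x) := by
        refine Finset.sum_le_sum fun R hR => ?_
        refine le_trans ?_ (hCar R.1 R.2)
        set G := F'.filter (fun Q => Q.1 ⊆ R.1) with hG
        have hemb : ∀ q : {x // x ∈ G}, IsDyadicCube q.1.1 ∧ q.1.1 ⊆ R.1 :=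
          fun q => ⟨q.1.2, (Finset.mem_filter.1 q.2).2⟩
        set emb : {x // x ∈ G} → {Q : Set (Rn n) // IsDyadicCube Q ∧ Q ⊆ R.1} :=
          fun q => ⟨q.1.1, hemb q⟩ with hembdef
        have hinj : Function.Injective emb := by
          intro q q' h
          have h2 : (emb q).1 = (emb q').1 := congrArg Subtype.val h
          exact Subtype.ext (Subtype.ext h2)
        calc ∑ Q ∈ G, a Q.1 = ∑ q ∈ G.attach, a q.1.1 := (Finset.sum_attach _ _).symm
          _ = ∑ q ∈ G.attach.map ⟨emb, hinj⟩, a q.1 := by rw [Finset.sum_map]; rfl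
          _ ≤ ∑' Q : {Q : Set (Rn n) // IsDyadicCube Q ∧ Q ⊆ R.1}, a Q.1 :=
              ENNReal.sum_le_tsum _
    _ = A * ∑ R ∈ Max, ∫⁻ x in R.1, ENNReal.ofReal (v x) := by rw [Finset.mul_sum]
    _ = A * ∫⁻ x in ⋃ R ∈ Max, R.1, ENNReal.ofReal (v x) := by
        rw [lintegral_biUnion_finset ?_ (fun R _ => R.2.measurableSet)]
        · intro R hR R' hR' hne
          exact Set.disjoint_iff_inter_eq_empty.2
            (hdisjsets R (Finset.mem_coe.1 hR) R' (Finset.mem_coe.1 hR') hne)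
    _ ≤ A * ∫⁻ x in {x | s < Mdw σ f x}, ENNReal.ofReal (v x) := by
        refine mul_le_mul_right (lintegral_mono_set ?_) A
        rintro x hx
        rw [Set.mem_iUnion₂] at hx
        obtain ⟨R, hR, hxR⟩ := hx
        exact lt_of_lt_of_le (hmemF' R (hMaxF' R hR)) (prod_wAvg_le_Mdw R.2 hxR)

end Level

section Tonelli

lemma tonelli_layer {n : ℕ} {pp : ℝ} (hpp : 1 < pp) {M : Rn n → ℝ≥0∞} (hMm : Measurable M)
    {v : Rn n → ℝ} (hvm : Measurable v) :
    ∫⁻ t in Set.Ioi (0:ℝ), ∫⁻ x,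
        ({q : ℝ × Rn n | ENNReal.ofReal q.1 < M q.2}).indicator
          (fun q => ENNReal.ofReal (v q.2)) (t, x) * ENNReal.ofReal (pp * t ^ (pp - 1))
      = ∫⁻ x, M x ^ pp * ENNReal.ofReal (v x) := by
  have hgm : Measurable fun t : ℝ => ENNReal.ofReal (pp * t ^ (pp - 1)) :=
    (measurable_const.mul ((Real.continuous_rpow_const (by linarith)).measurable)).ennreal_ofReal
  have hGm : Measurable fun q : ℝ × Rn n =>
      ({q : ℝ × Rn n | ENNReal.ofReal q.1 < M q.2}).indicator
        (fun q => ENNReal.ofReal (v q.2)) q * ENNReal.ofReal (pp * q.1 ^ (pp - 1)) :=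
    (Measurable.indicator ((hvm.comp measurable_snd).ennreal_ofReal)
      (measurableSet_lt (ENNReal.measurable_ofReal.comp measurable_fst)
        (hMm.comp measurable_snd))).mul (hgm.comp measurable_fst)
  rw [lintegral_lintegral_swap hGm.aemeasurable]
  refine lintegral_congr fun x => ?_
  have hpt : ∀ t : ℝ,
      ({q : ℝ × Rn n | ENNReal.ofReal q.1 < M q.2}).indicator
          (fun q => ENNReal.ofReal (v q.2)) (t, x) * ENNReal.ofReal (pp * t ^ (pp - 1))
        = ENNReal.ofReal (v x) *
            ({t : ℝ | ENNReal.ofReal t < M x}).indicator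
              (fun t => ENNReal.ofReal (pp * t ^ (pp - 1))) t := by
    intro t
    by_cases h : ENNReal.ofReal t < M x
    · simp [Set.indicator_apply, Set.mem_setOf_eq, h, mul_comm]
    · simp [Set.indicator_apply, Set.mem_setOf_eq, h]
  simp_rw [hpt]
  rw [lintegral_const_mul _ (hgm.indicator (measurable_layer_set _)), layer_pt hpp (M x),
    mul_comm]

end Tonelli


/-- Multilinear Carleson embedding: first inequality of Lemma 3.1. -/
theorem stmt0 {n m : ℕ} (hm : 0 < m) (p : Fin m → ℝ) (pp : ℝ)
    (hp : ∀ i, 1 < p i) (hpp : 1 / pp = ∑ i, 1 / p i) (hpp1 : 1 < pp)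
    (σ : Fin m → Rn n → ℝ) (hσ0 : ∀ i x, 0 ≤ σ i x) (hσm : ∀ i, Measurable (σ i))
    (hσloc : ∀ i, LocallyIntegrable (σ i) volume)
    (A : ℝ≥0∞) (a : Set (Rn n) → ℝ≥0∞)
    (hCarleson : ∀ R : Set (Rn n), IsDyadicCube R →
      (∑' Q : {Q : Set (Rn n) // IsDyadicCube Q ∧ Q ⊆ R}, a Q.1) ≤
        A * setInt R fun x => ∏ i, σ i x ^ (pp / p i))
    (f : Fin m → Rn n → ℝ) (hf0 : ∀ i x, 0 ≤ f i x) (hfm : ∀ i, Measurable (f i))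
    (hfLp : ∀ i, (∫⁻ x, ENNReal.ofReal (f i x) ^ p i * ENNReal.ofReal (σ i x)) < ∞) :
    (∑' Q : {Q : Set (Rn n) // IsDyadicCube Q},
        a Q.1 * (∏ i, wAvg Q.1 (σ i) (f i)) ^ pp) ^ (1 / pp) ≤
      A ^ (1 / pp) * nLp pp (fun x => ∏ i, σ i x ^ (pp / p i)) (Mdw σ f) := by
  classical
  set v : Rn n → ℝ := fun x => ∏ i, σ i x ^ (pp / p i) with hv
  have hvm : Measurable v :=
    Finset.measurable_prod _ fun i _ =>
      (Real.continuous_rpow_const (div_nonneg (by linarith) (by linarith [hp i]))).measurable.comp (hσm i)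
  have hMm : Measurable (Mdw σ f) := measurable_Mdw σ f
  have hgm : Measurable fun t : ℝ => ENNReal.ofReal (pp * t ^ (pp - 1)) :=
    (measurable_const.mul ((Real.continuous_rpow_const (by linarith)).measurable)).ennreal_ofReal
  have hGm : Measurable fun q : ℝ × Rn n =>
      ({q : ℝ × Rn n | ENNReal.ofReal q.1 < Mdw σ f q.2}).indicator
        (fun q => ENNReal.ofReal (v q.2)) q * ENNReal.ofReal (pp * q.1 ^ (pp - 1)) :=
    (Measurable.indicator ((hvm.comp measurable_snd).ennreal_ofReal)
      (measurableSet_lt (ENNReal.measurable_ofReal.comp measurable_fst)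
        (hMm.comp measurable_snd))).mul (hgm.comp measurable_fst)
  have hCar' : ∀ R : Set (Rn n), IsDyadicCube R →
      (∑' Q : {Q : Set (Rn n) // IsDyadicCube Q ∧ Q ⊆ R}, a Q.1) ≤
        A * ∫⁻ x in R, ENNReal.ofReal (v x) := fun R hR => hCarleson R hR
  have key : (∑' Q : {Q : Set (Rn n) // IsDyadicCube Q},
      a Q.1 * (∏ i, wAvg Q.1 (σ i) (f i)) ^ pp) ≤
      A * ∫⁻ x, Mdw σ f x ^ pp * ENNReal.ofReal (v x) := by
    calc (∑' Q : {Q : Set (Rn n) // IsDyadicCube Q},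
        a Q.1 * (∏ i, wAvg Q.1 (σ i) (f i)) ^ pp)
        = ∑' Q : {Q : Set (Rn n) // IsDyadicCube Q},
            ∫⁻ t in Set.Ioi (0:ℝ), a Q.1 *
              ({t : ℝ | ENNReal.ofReal t < ∏ i, wAvg Q.1 (σ i) (f i)}).indicator
                (fun t => ENNReal.ofReal (pp * t ^ (pp - 1))) t := by
          refine tsum_congr fun Q => ?_
          rw [lintegral_const_mul _ (hgm.indicator (measurable_layer_set _)),
            layer_pt hpp1]
      _ = ∫⁻ t in Set.Ioi (0:ℝ), ∑' Q : {Q : Set (Rn n) // IsDyadicCube Q},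
            a Q.1 * ({t : ℝ | ENNReal.ofReal t < ∏ i, wAvg Q.1 (σ i) (f i)}).indicator
              (fun t => ENNReal.ofReal (pp * t ^ (pp - 1))) t :=
          (lintegral_tsum fun Q =>
            ((hgm.indicator (measurable_layer_set _)).const_mul _).aemeasurable).symm
      _ ≤ ∫⁻ t in Set.Ioi (0:ℝ), A * ∫⁻ x,
            ({q : ℝ × Rn n | ENNReal.ofReal q.1 < Mdw σ f q.2}).indicator
              (fun q => ENNReal.ofReal (v q.2)) (t, x) *
              ENNReal.ofReal (pp * t ^ (pp - 1)) := by
          refine lintegral_mono fun t => ?_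
          have e1 : (∑' Q : {Q : Set (Rn n) // IsDyadicCube Q},
              a Q.1 * ({t : ℝ | ENNReal.ofReal t < ∏ i, wAvg Q.1 (σ i) (f i)}).indicator
                (fun t => ENNReal.ofReal (pp * t ^ (pp - 1))) t)
              = (∑' Q : {Q : Set (Rn n) // IsDyadicCube Q},
                  if ENNReal.ofReal t < ∏ i, wAvg Q.1 (σ i) (f i) then a Q.1 else 0) *
                  ENNReal.ofReal (pp * t ^ (pp - 1)) := by
            rw [← ENNReal.tsum_mul_right]
            refine tsum_congr fun Q => ?_
            by_cases h : ENNReal.ofReal t < ∏ i, wAvg Q.1 (σ i) (f i)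
            · simp [Set.indicator_apply, h]
            · simp [Set.indicator_apply, h]
          have e2 : ∫⁻ x, ({q : ℝ × Rn n | ENNReal.ofReal q.1 < Mdw σ f q.2}).indicator
                (fun q => ENNReal.ofReal (v q.2)) (t, x) *
                ENNReal.ofReal (pp * t ^ (pp - 1))
              = (∫⁻ x in {x | ENNReal.ofReal t < Mdw σ f x}, ENNReal.ofReal (v x)) *
                  ENNReal.ofReal (pp * t ^ (pp - 1)) := by
            rw [lintegral_mul_const' _ _ ENNReal.ofReal_ne_top]
            congr 1
            have : ∀ x : Rn n, ({q : ℝ × Rn n | ENNReal.ofReal q.1 < Mdw σ f q.2}).indicator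
                (fun q => ENNReal.ofReal (v q.2)) (t, x)
                = ({x : Rn n | ENNReal.ofReal t < Mdw σ f x}).indicator
                    (fun x => ENNReal.ofReal (v x)) x := by
              intro x
              by_cases h : ENNReal.ofReal t < Mdw σ f x
              · simp [Set.indicator_apply, h]
              · simp [Set.indicator_apply, h]
            simp_rw [this]
            rw [lintegral_indicator (measurableSet_lt measurable_const hMm)]
          rw [e1, e2, ← mul_assoc]
          exact mul_le_mul_left (carleson_level σ f A v a hCar' (ENNReal.ofReal t)) _
      _ = A * ∫⁻ t in Set.Ioi (0:ℝ), ∫⁻ x,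
            ({q : ℝ × Rn n | ENNReal.ofReal q.1 < Mdw σ f q.2}).indicator
              (fun q => ENNReal.ofReal (v q.2)) (t, x) *
              ENNReal.ofReal (pp * t ^ (pp - 1)) := by
          rw [lintegral_const_mul A hGm.lintegral_prod_right']
      _ = A * ∫⁻ x, Mdw σ f x ^ pp * ENNReal.ofReal (v x) := by
          rw [tonelli_layer hpp1 hMm hvm]
  have hinv : (0:ℝ) ≤ 1 / pp := by positivity
  have h1 := ENNReal.rpow_le_rpow key hinv
  rw [ENNReal.mul_rpow_of_nonneg _ _ hinv] at h1
  simp only [nLp]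
  exact h1
end
end

section
/- Let $1<p_i<\infty$, $\frac1p=\sum_{i=1}^m\frac1{p_i}$, and let $\sigma_1,\dots,\sigma_m$ be weights. Then $\|\mathcal{M}^d_{\vec\sigma}(\vec f)\|_{L^p(\nu_{\vec\sigma})}\le \prod_{i=1}^m p_i' \|f_i\|_{L^{p_i}(\sigma_i)}$, where $\nu_{\vec\sigma}=\prod_{i=1}^m\sigma_i^{p/p_i}$. -/
open MeasureTheory ENNReal

noncomputable section

namespace Aux

open Set

variable {n : ℕ}


variable {n : ℕ}

lemma mem_dyadicCube {k : ℤ} {j : Fin n → ℤ} {x : Rn n} :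
    x ∈ dyadicCube k j ↔ ∀ i, (j i : ℝ) * (2:ℝ)^(-k) ≤ x i ∧ x i < ((j i : ℝ) + 1) * (2:ℝ)^(-k) := by
  unfold dyadicCube cube
  simp only [Set.mem_pi, Set.mem_univ, Set.mem_Ico, forall_true_left]
  constructor <;> intro h i <;> have := h i <;> constructor <;> [skip; skip; skip; skip] <;> linarith [this.1, this.2]

lemma measurableSet_dyadicCube {k : ℤ} {j : Fin n → ℤ} : MeasurableSet (dyadicCube k j) :=
  MeasurableSet.univ_pi fun _ => measurableSet_Ico

/-- index of the level-`k` dyadic cube containing `x` -/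
def fl (k : ℤ) (x : Rn n) : Fin n → ℤ := fun i => ⌊x i * (2:ℝ)^k⌋

lemma two_zpow_pos (k : ℤ) : (0:ℝ) < (2:ℝ)^k := zpow_pos (by norm_num) k

lemma mem_fl (k : ℤ) (x : Rn n) : x ∈ dyadicCube k (fl k x) := by
  rw [mem_dyadicCube]
  intro i
  have hpos := two_zpow_pos (-k)
  have h1 : ((fl k x i : ℝ)) ≤ x i * (2:ℝ)^k := Int.floor_le _
  have h2 : x i * (2:ℝ)^k < (fl k x i : ℝ) + 1 := Int.lt_floor_add_one _
  have hk : (2:ℝ)^k * (2:ℝ)^(-k) = 1 := by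
    rw [← zpow_add₀ (by norm_num : (2:ℝ) ≠ 0)]; simp
  constructor
  · calc (fl k x i : ℝ) * (2:ℝ)^(-k) ≤ (x i * (2:ℝ)^k) * (2:ℝ)^(-k) := by
          exact mul_le_mul_of_nonneg_right h1 hpos.le
    _ = x i := by rw [mul_assoc, hk, mul_one]
  · calc x i = (x i * (2:ℝ)^k) * (2:ℝ)^(-k) := by rw [mul_assoc, hk, mul_one]
    _ < ((fl k x i : ℝ) + 1) * (2:ℝ)^(-k) := by
          exact mul_lt_mul_of_pos_right h2 hpos

lemma fl_eq_of_mem {k : ℤ} {j : Fin n → ℤ} {x : Rn n} (hx : x ∈ dyadicCube k j) :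
    fl k x = j := by
  rw [mem_dyadicCube] at hx
  funext i
  have hpos := two_zpow_pos k
  have h1 := (hx i).1
  have h2 := (hx i).2
  have hk : (2:ℝ)^(-k) * (2:ℝ)^k = 1 := by
    rw [← zpow_add₀ (by norm_num : (2:ℝ) ≠ 0)]; simp
  have e1 : (j i : ℝ) ≤ x i * (2:ℝ)^k := by
    have := mul_le_mul_of_nonneg_right h1 hpos.le
    rwa [mul_assoc, hk, mul_one] at this
  have e2 : x i * (2:ℝ)^k < (j i : ℝ) + 1 := by
    have := mul_lt_mul_of_pos_right h2 hpos
    rwa [mul_assoc, hk, mul_one] at this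
  exact Int.floor_eq_iff.mpr ⟨e1, e2⟩

lemma eq_of_mem_mem {k : ℤ} {j j' : Fin n → ℤ} {x : Rn n}
    (h1 : x ∈ dyadicCube k j) (h2 : x ∈ dyadicCube k j') : j = j' := by
  rw [← fl_eq_of_mem h1, ← fl_eq_of_mem h2]

/-- Nesting: if a coarser cube and a finer cube meet, the finer one is contained. -/
lemma dyadicCube_subset {k k' : ℤ} (hkk : k ≤ k') {j : Fin n → ℤ} {j' : Fin n → ℤ} {y : Rn n}
    (hy : y ∈ dyadicCube k j) (hy' : y ∈ dyadicCube k' j') :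
    dyadicCube k' j' ⊆ dyadicCube k j := by
  intro z hz
  rw [mem_dyadicCube] at hy hy' hz ⊢
  intro i
  have hpos' := two_zpow_pos (-k')
  set m : ℕ := (k' - k).toNat with hm
  have hmk : (m : ℤ) = k' - k := Int.toNat_of_nonneg (by omega)
  -- (j i) * 2^{-k} = (j i * 2^m) * 2^{-k'}
  have key : ∀ a : ℤ, ((a * 2^m : ℤ) : ℝ) * (2:ℝ)^(-k') = (a : ℝ) * (2:ℝ)^(-k) := by
    intro a
    push_cast
    rw [mul_assoc]
    congr 1
    rw [← zpow_natCast (2:ℝ) m, ← zpow_add₀ (by norm_num : (2:ℝ) ≠ 0)]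
    congr 1
    omega
  set a : ℤ := j i * 2^m
  set b : ℤ := (j i + 1) * 2^m
  have hb : ((j i : ℝ) + 1) * (2:ℝ)^(-k) = (b:ℝ) * (2:ℝ)^(-k') := by
    rw [key (j i + 1)]; push_cast; ring
  have ha : (j i : ℝ) * (2:ℝ)^(-k) = (a:ℝ) * (2:ℝ)^(-k') := (key (j i)).symm
  -- from y: a ≤ j' i  and  j' i < b
  have hy1 : (a:ℝ) * (2:ℝ)^(-k') ≤ y i := by rw [← ha]; exact (hy i).1
  have hy2 : y i < (b:ℝ) * (2:ℝ)^(-k') := by rw [← hb]; exact (hy i).2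
  have hle : a ≤ j' i := by
    by_contra hcon
    push_neg at hcon
    have : ((j' i : ℝ) + 1) * (2:ℝ)^(-k') ≤ (a:ℝ) * (2:ℝ)^(-k') := by
      apply mul_le_mul_of_nonneg_right _ hpos'.le
      exact_mod_cast hcon
    linarith [(hy' i).2]
  have hlt : j' i + 1 ≤ b := by
    by_contra hcon
    push_neg at hcon
    have : (b:ℝ) * (2:ℝ)^(-k') ≤ (j' i : ℝ) * (2:ℝ)^(-k') := by
      apply mul_le_mul_of_nonneg_right _ hpos'.le
      exact_mod_cast (by omega : b ≤ j' i)
    linarith [(hy' i).1]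
  constructor
  · rw [ha]
    calc (a:ℝ) * (2:ℝ)^(-k') ≤ (j' i : ℝ) * (2:ℝ)^(-k') :=
        mul_le_mul_of_nonneg_right (by exact_mod_cast hle) hpos'.le
    _ ≤ z i := (hz i).1
  · rw [hb]
    calc z i < ((j' i : ℝ) + 1) * (2:ℝ)^(-k') := (hz i).2
    _ ≤ (b:ℝ) * (2:ℝ)^(-k') :=
        mul_le_mul_of_nonneg_right (by exact_mod_cast hlt) hpos'.le

lemma corner_mem {k : ℤ} {j : Fin n → ℤ} :
    (fun i => (j i : ℝ) * (2:ℝ)^(-k)) ∈ dyadicCube k j := by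
  rw [mem_dyadicCube]
  intro i
  have hpos := two_zpow_pos (-k)
  exact ⟨le_refl _, by nlinarith⟩



def dAvg (μ : Measure (Rn n)) (g : Rn n → ℝ≥0∞) (k : ℤ) (j : Fin n → ℤ) : ℝ≥0∞ :=
  (∫⁻ y in dyadicCube k j, g y ∂μ) / μ (dyadicCube k j)

def dMax (μ : Measure (Rn n)) (g : Rn n → ℝ≥0∞) (x : Rn n) : ℝ≥0∞ :=
  ⨆ (k : ℤ) (j : Fin n → ℤ) (_ : x ∈ dyadicCube k j), dAvg μ g k j

def dMaxT (N : ℕ) (μ : Measure (Rn n)) (g : Rn n → ℝ≥0∞) (x : Rn n) : ℝ≥0∞ :=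
  ⨆ (k : ℤ) (_ : -(N:ℤ) ≤ k) (j : Fin n → ℤ) (_ : x ∈ dyadicCube k j), dAvg μ g k j
lemma indicator_iSup {Q : Set (Rn n)} (c : ℝ≥0∞) :
    (fun x => ⨆ (_ : x ∈ Q), c) = Q.indicator (fun _ => c) := by
  funext x
  by_cases hx : x ∈ Q
  · simp [hx]
  · simp [hx]

lemma measurable_dMax (μ : Measure (Rn n)) (g : Rn n → ℝ≥0∞) : Measurable (dMax μ g) := by
  apply Measurable.iSup; intro k
  apply Measurable.iSup; intro j
  have : (fun x => ⨆ (_ : x ∈ dyadicCube k j), dAvg μ g k j)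
      = (dyadicCube k j).indicator (fun _ => dAvg μ g k j) := indicator_iSup _
  rw [this]
  exact Measurable.indicator measurable_const measurableSet_dyadicCube

lemma measurable_dMaxT (N : ℕ) (μ : Measure (Rn n)) (g : Rn n → ℝ≥0∞) :
    Measurable (dMaxT N μ g) := by
  apply Measurable.iSup; intro k
  apply Measurable.iSup; intro _
  apply Measurable.iSup; intro j
  have : (fun x => ⨆ (_ : x ∈ dyadicCube k j), dAvg μ g k j)
      = (dyadicCube k j).indicator (fun _ => dAvg μ g k j) := indicator_iSup _
  rw [this]
  exact Measurable.indicator measurable_const measurableSet_dyadicCube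

lemma dMaxT_le_dMax (N : ℕ) (μ : Measure (Rn n)) (g : Rn n → ℝ≥0∞) (x : Rn n) :
    dMaxT N μ g x ≤ dMax μ g x := by
  refine iSup_le fun k => iSup_le fun _ => iSup_le fun j => iSup_le fun hx => ?_
  exact le_iSup_of_le k (le_iSup_of_le j (le_iSup_of_le hx le_rfl))

lemma dMax_eq_iSup_dMaxT (μ : Measure (Rn n)) (g : Rn n → ℝ≥0∞) (x : Rn n) :
    dMax μ g x = ⨆ N : ℕ, dMaxT N μ g x := by
  apply le_antisymm
  · refine iSup_le fun k => iSup_le fun j => iSup_le fun hx => ?_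
    refine le_iSup_of_le k.natAbs ?_
    refine le_iSup_of_le k (le_iSup_of_le (by omega) (le_iSup_of_le j (le_iSup_of_le hx le_rfl)))
  · exact iSup_le fun N => dMaxT_le_dMax N μ g x

lemma dMaxT_mono (μ : Measure (Rn n)) (g : Rn n → ℝ≥0∞) (x : Rn n) :
    Monotone (fun N => dMaxT N μ g x) := by
  intro N M hNM
  refine iSup_le fun k => iSup_le fun hk => iSup_le fun j => iSup_le fun hx => ?_
  refine le_iSup_of_le k (le_iSup_of_le (by omega) (le_iSup_of_le j (le_iSup_of_le hx le_rfl)))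

lemma lam_mul_le_of_lt_div {lam a b : ℝ≥0∞} (h : lam < a / b) : lam * b ≤ a := by
  rcases eq_or_ne b 0 with rfl | hb0
  · simp
  rcases eq_or_ne b ∞ with rfl | hbt
  · simp [ENNReal.div_top] at h
  calc lam * b ≤ (a / b) * b := mul_le_mul_left h.le b
  _ = a := ENNReal.div_mul_cancel hb0 hbt

/-- weak type inequality at a fixed truncation level -/
lemma weakT (N : ℕ) (μ : Measure (Rn n)) {g : Rn n → ℝ≥0∞} (hg : Measurable g) (lam : ℝ≥0∞) :
    lam * μ {x | lam < dMaxT N μ g x} ≤ ∫⁻ x in {x | lam < dMax μ g x}, g x ∂μ := by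
  classical
  set Sel : Set (ℤ × (Fin n → ℤ)) :=
    {q | -(N:ℤ) ≤ q.1 ∧ lam < dAvg μ g q.1 q.2 ∧
      ∀ k', -(N:ℤ) ≤ k' → k' < q.1 →
        ¬ lam < dAvg μ g k' (fl k' (fun i => (q.2 i : ℝ) * (2:ℝ)^(-q.1)))} with hSel
  -- each point of E is in a selected cube
  have cover : {x | lam < dMaxT N μ g x} ⊆ ⋃ q : Sel, dyadicCube q.1.1 q.1.2 := by
    intro x hx
    simp only [Set.mem_setOf_eq, dMaxT, lt_iSup_iff] at hx
    obtain ⟨k, hk, j, hxj, hlt⟩ := hx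
    have hjx : j = fl k x := (fl_eq_of_mem hxj).symm
    -- minimal level
    have hbdd : ∃ b : ℤ, ∀ z ∈ {k : ℤ | -(N:ℤ) ≤ k ∧ lam < dAvg μ g k (fl k x)}, b ≤ z :=
      ⟨-(N:ℤ), fun z hz => hz.1⟩
    have hne : ∃ z, z ∈ {k : ℤ | -(N:ℤ) ≤ k ∧ lam < dAvg μ g k (fl k x)} :=
      ⟨k, hk, by rwa [← hjx]⟩
    obtain ⟨k₀, hk₀, hmin⟩ := Int.exists_least_of_bdd hbdd hne
    refine Set.mem_iUnion.mpr ⟨⟨(k₀, fl k₀ x), ?_⟩, mem_fl k₀ x⟩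
    refine ⟨hk₀.1, hk₀.2, ?_⟩
    intro k' hk' hk'lt
    set c : Rn n := fun i => ((fl k₀ x) i : ℝ) * (2:ℝ)^(-k₀) with hc
    have hcmem : c ∈ dyadicCube k₀ (fl k₀ x) := corner_mem
    have hsub : dyadicCube k₀ (fl k₀ x) ⊆ dyadicCube k' (fl k' c) :=
      dyadicCube_subset hk'lt.le (mem_fl k' c) hcmem
    have hxc : x ∈ dyadicCube k' (fl k' c) := hsub (mem_fl k₀ x)
    have : fl k' c = fl k' x := (fl_eq_of_mem hxc).symm ▸ rfl
    rw [show fl k' c = fl k' x from by rw [fl_eq_of_mem hxc]]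
    intro hcon
    exact absurd (hmin k' ⟨hk', hcon⟩) (by omega)
  -- selected cubes are inside the (untruncated) superlevel set
  have inE' : ∀ q : Sel, dyadicCube q.1.1 q.1.2 ⊆ {x | lam < dMax μ g x} := by
    rintro ⟨⟨k, j⟩, hq⟩ y hy
    have hy' : y ∈ dyadicCube k j := hy
    have h1 : dAvg μ g k j ≤ dMax μ g y :=
      le_iSup_of_le k (le_iSup_of_le j (le_iSup_of_le hy' le_rfl))
    exact lt_of_lt_of_le hq.2.1 h1
  -- disjointness
  have disj : ∀ q q' : Sel, (dyadicCube q.1.1 q.1.2 ∩ dyadicCube q'.1.1 q'.1.2).Nonempty →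
      q = q' := by
    have main : ∀ q q' : Sel, q.1.1 < q'.1.1 →
        (dyadicCube q.1.1 q.1.2 ∩ dyadicCube q'.1.1 q'.1.2).Nonempty → False := by
      rintro ⟨⟨k, j⟩, hq⟩ ⟨⟨k', j'⟩, hq'⟩ hlt ⟨y, hy, hy'⟩
      have hsub : dyadicCube k' j' ⊆ dyadicCube k j := dyadicCube_subset hlt.le hy hy'
      set c' : Rn n := fun i => ((j' : Fin n → ℤ) i : ℝ) * (2:ℝ)^(-k') with hc'
      have hc'mem : c' ∈ dyadicCube k' j' := corner_mem
      have hc'k : c' ∈ dyadicCube k j := hsub hc'mem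
      have : fl k c' = j := fl_eq_of_mem hc'k
      have := hq'.2.2 k hq.1 hlt
      rw [show fl k c' = j from fl_eq_of_mem hc'k] at this
      exact this hq.2.1
    rintro q q' hne
    rcases lt_trichotomy q.1.1 q'.1.1 with h | h | h
    · exact (main q q' h hne).elim
    · obtain ⟨y, hy, hy'⟩ := hne
      have hj : q.1.2 = q'.1.2 := by
        have h1 : y ∈ dyadicCube q.1.1 q.1.2 := hy
        have h2 : y ∈ dyadicCube q.1.1 q'.1.2 := by rw [h]; exact hy'
        rw [← fl_eq_of_mem h1, ← fl_eq_of_mem h2]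
      ext1
      exact Prod.ext h hj
    · exact (main q' q h ⟨hne.choose, hne.choose_spec.2, hne.choose_spec.1⟩).elim
  -- put it together
  have hcount : Countable Sel := Set.Countable.to_subtype (Set.to_countable _)
  have hdisj : Pairwise (Function.onFun Disjoint fun q : Sel => dyadicCube q.1.1 q.1.2) := by
    intro q q' hne
    rw [Function.onFun, Set.disjoint_iff_inter_eq_empty]
    by_contra hcon
    exact hne (disj q q' (Set.nonempty_iff_ne_empty.mpr hcon))
  calc lam * μ {x | lam < dMaxT N μ g x}
      ≤ lam * μ (⋃ q : Sel, dyadicCube q.1.1 q.1.2) := by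
        exact mul_le_mul_right (measure_mono cover) lam
    _ ≤ lam * ∑' q : Sel, μ (dyadicCube q.1.1 q.1.2) := by
        exact mul_le_mul_right (measure_iUnion_le _) lam
    _ = ∑' q : Sel, lam * μ (dyadicCube q.1.1 q.1.2) := ENNReal.tsum_mul_left.symm
    _ ≤ ∑' q : Sel, ∫⁻ y in dyadicCube q.1.1 q.1.2, g y ∂μ := by
        refine ENNReal.tsum_le_tsum fun q => ?_
        exact lam_mul_le_of_lt_div q.2.2.1
    _ = ∫⁻ y in ⋃ q : Sel, dyadicCube q.1.1 q.1.2, g y ∂μ := by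
        rw [lintegral_iUnion (fun _ => measurableSet_dyadicCube) hdisj]
    _ ≤ ∫⁻ x in {x | lam < dMax μ g x}, g x ∂μ := by
        refine lintegral_mono_set ?_
        exact Set.iUnion_subset inE'

lemma weak (μ : Measure (Rn n)) {g : Rn n → ℝ≥0∞} (hg : Measurable g) (lam : ℝ≥0∞) :
    lam * μ {x | lam < dMax μ g x} ≤ ∫⁻ x in {x | lam < dMax μ g x}, g x ∂μ := by
  have hset : {x | lam < dMax μ g x} = ⋃ N : ℕ, {x | lam < dMaxT N μ g x} := by
    ext x
    simp only [Set.mem_setOf_eq, Set.mem_iUnion, dMax_eq_iSup_dMaxT μ g x, lt_iSup_iff]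
  rw [hset]
  have hmono : Monotone (fun N : ℕ => {x | lam < dMaxT N μ g x}) := by
    intro N M hNM x hx
    exact lt_of_lt_of_le hx (dMaxT_mono μ g x hNM)
  rw [hmono.directed_le.measure_iUnion]
  rw [ENNReal.mul_iSup]
  refine iSup_le fun N => ?_
  exact (weakT N μ hg lam).trans (by rw [← hset])
/-- `∫⁻ t in Ioo 0 a, t^r = a^{r+1}/(r+1)` for `r > -1`, `a ≥ 0`. -/
lemma lintegral_Ioo_rpow {r : ℝ} (hr : -1 < r) {a : ℝ} (ha : 0 ≤ a) :
    ∫⁻ t in Ioo (0:ℝ) a, ENNReal.ofReal (t ^ r) = ENNReal.ofReal (a ^ (r+1) / (r+1)) := by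
  rcases eq_or_lt_of_le ha with rfl | ha'
  · simp [Real.zero_rpow (by linarith : r + 1 ≠ 0)]
  have hint : IntegrableOn (fun t : ℝ => t ^ r) (Ioo 0 a) := by
    have := (intervalIntegral.intervalIntegrable_rpow' (a := 0) (b := a) hr)
    rw [intervalIntegrable_iff_integrableOn_Ioo_of_le ha] at this
    exact this
  rw [← ofReal_integral_eq_lintegral_ofReal hint]
  · congr 1
    have h1 : ∫ t in Ioo (0:ℝ) a, t ^ r = ∫ t in (0:ℝ)..a, t ^ r := by
      rw [intervalIntegral.integral_of_le ha, ← integral_Ioc_eq_integral_Ioo]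
    rw [h1, integral_rpow (Or.inl hr)]
    rw [Real.zero_rpow (by linarith : r + 1 ≠ 0)]
    ring_nf
  · filter_upwards [self_mem_ae_restrict (measurableSet_Ioo : MeasurableSet (Ioo (0:ℝ) a))]
    intro t ht
    exact Real.rpow_nonneg ht.1.le r

lemma dMax_le_const (μ : Measure (Rn n)) {g : Rn n → ℝ≥0∞} {c : ℝ≥0∞} (hgc : ∀ x, g x ≤ c)
    (x : Rn n) : dMax μ g x ≤ c := by
  refine iSup_le fun k => iSup_le fun j => iSup_le fun _ => ?_
  unfold dAvg
  refine ENNReal.div_le_of_le_mul ?_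
  calc ∫⁻ y in dyadicCube k j, g y ∂μ ≤ ∫⁻ _ in dyadicCube k j, c ∂μ :=
        setLIntegral_mono' (by
          exact MeasurableSet.univ_pi fun _ => measurableSet_Ico) (fun y _ => hgc y)
  _ = c * μ (dyadicCube k j) := by rw [setLIntegral_const]

/-- strong type, bounded integrable case -/
lemma strong_bounded (μ : Measure (Rn n)) [SigmaFinite μ] {g : Rn n → ℝ≥0∞} (hg : Measurable g)
    {q : ℝ} (hq : 1 < q) {c : ℝ≥0∞} (hc : c ≠ ∞) (hgc : ∀ x, g x ≤ c)
    (hgi : ∫⁻ x, g x ∂μ ≠ ∞) :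
    (∫⁻ x, dMax μ g x ^ q ∂μ) ^ (1/q) ≤
      ENNReal.ofReal (q/(q-1)) * (∫⁻ x, g x ^ q ∂μ) ^ (1/q) := by
  have hq0 : (0:ℝ) < q := by linarith
  set T := dMax μ g with hT
  have hTm : Measurable T := measurable_dMax μ g
  have hTc : ∀ x, T x ≤ c := dMax_le_const μ hgc
  have hTtop : ∀ x, T x ≠ ∞ := fun x => ((hTc x).trans_lt hc.lt_top).ne
  set F : Rn n → ℝ := fun x => (T x).toReal with hF
  have hFm : Measurable F := hTm.ennreal_toReal
  have hFof : ∀ x, ENNReal.ofReal (F x) = T x := fun x => ofReal_toReal (hTtop x)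
  set I := ∫⁻ x, T x ^ q ∂μ with hI
  -- layer cake
  have hlc : I = ENNReal.ofReal q *
      ∫⁻ t in Ioi (0:ℝ), μ {a | t < F a} * ENNReal.ofReal (t ^ (q - 1)) := by
    rw [hI]
    rw [show (fun x => T x ^ q) = fun x => ENNReal.ofReal (F x ^ q) from funext fun x => by
      rw [← hFof x, ← ENNReal.ofReal_rpow_of_nonneg toReal_nonneg hq0.le]]
    exact lintegral_rpow_eq_lintegral_meas_lt_mul μ (ae_of_all _ fun x => toReal_nonneg)
      hFm.aemeasurable hq0
  have hsets : ∀ t : ℝ, 0 < t → {a | t < F a} = {a | ENNReal.ofReal t < T a} := by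
    intro t ht
    ext a
    simp only [mem_setOf_eq, ← hFof a]
    rw [ENNReal.ofReal_lt_ofReal_iff_of_nonneg ht.le]
  -- finiteness of I
  have hIfin : I ≠ ∞ := by
    refine LT.lt.ne ?_
    set c' := c.toReal with hc'
    have hW : (∫⁻ x, g x ∂μ) ≠ ∞ := hgi
    have key : ∀ t ∈ Ioi (0:ℝ), μ {a | t < F a} * ENNReal.ofReal (t ^ (q - 1)) ≤
        (Ioo (0:ℝ) c').indicator (fun t => (∫⁻ x, g x ∂μ) * ENNReal.ofReal (t ^ (q - 2))) t := by
      intro t ht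
      rcases lt_or_ge t c' with htc | htc
      · rw [indicator_of_mem (by exact ⟨ht, htc⟩)]
        have hw := weak μ hg (ENNReal.ofReal t)
        have hsplit : ENNReal.ofReal (t ^ (q-1)) = ENNReal.ofReal t * ENNReal.ofReal (t ^ (q-2)) := by
          rw [← ENNReal.ofReal_mul (le_of_lt ht)]
          congr 1
          rw [show q - 1 = 1 + (q-2) by ring, Real.rpow_add ht, Real.rpow_one]
        rw [hsets t ht, hsplit, ← mul_assoc, mul_comm (μ _) (ENNReal.ofReal t)]
        refine mul_le_mul_left ?_ _
        exact hw.trans ((lintegral_mono' Measure.restrict_le_self le_rfl))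
      · have hempty : {a | t < F a} = ∅ := by
          ext a
          simp only [mem_setOf_eq, mem_empty_iff_false, iff_false, not_lt]
          calc F a ≤ c' := toReal_mono hc (hTc a)
          _ ≤ t := htc
        rw [hempty]
        simp
    calc I ≤ ENNReal.ofReal q * ∫⁻ t in Ioi (0:ℝ),
        (Ioo (0:ℝ) c').indicator (fun t => (∫⁻ x, g x ∂μ) * ENNReal.ofReal (t ^ (q - 2))) t := by
          rw [hlc]
          exact mul_le_mul_right (setLIntegral_mono' measurableSet_Ioi key) _
    _ ≤ ENNReal.ofReal q * ∫⁻ t,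
        (Ioo (0:ℝ) c').indicator (fun t => (∫⁻ x, g x ∂μ) * ENNReal.ofReal (t ^ (q - 2))) t := by
          exact mul_le_mul_right (setLIntegral_le_lintegral _ _) _
    _ = ENNReal.ofReal q * ((∫⁻ x, g x ∂μ) * ∫⁻ t in Ioo (0:ℝ) c', ENNReal.ofReal (t ^ (q - 2))) := by
          rw [lintegral_indicator measurableSet_Ioo, lintegral_const_mul' _ _ hW]
    _ = ENNReal.ofReal q * ((∫⁻ x, g x ∂μ) * ENNReal.ofReal (c' ^ (q-1) / (q-1))) := by
          rw [lintegral_Ioo_rpow (by linarith) toReal_nonneg, show q - 2 + 1 = q - 1 by ring]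
    _ < ∞ := by
          refine ENNReal.mul_lt_top ofReal_lt_top ?_
          exact ENNReal.mul_lt_top hW.lt_top ofReal_lt_top
  -- main estimate: I ≤ q' * ∫ g T^{q-1}
  have hmain : I ≤ ENNReal.ofReal (q/(q-1)) * ∫⁻ x, g x * T x ^ (q-1) ∂μ := by
    set A : Set (ℝ × Rn n) := {p | ENNReal.ofReal p.1 < T p.2} with hA
    have hAm : MeasurableSet A :=
      measurableSet_lt measurable_fst.ennreal_ofReal (hTm.comp measurable_snd)
    set H : ℝ → Rn n → ℝ≥0∞ := fun t x => A.indicator (fun _ => (1:ℝ≥0∞)) (t,x) * (g x * ENNReal.ofReal (t ^ (q-2))) with hH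
    have hHm : AEMeasurable (Function.uncurry H) ((volume.restrict (Ioi (0:ℝ))).prod μ) := by
      refine Measurable.aemeasurable ?_
      refine Measurable.mul ?_ ?_
      · exact (measurable_const.indicator hAm)
      · exact ((hg.comp measurable_snd).mul
          ((measurable_fst.pow_const _).ennreal_ofReal))
    have step1 : I ≤ ENNReal.ofReal q * ∫⁻ t in Ioi (0:ℝ), ∫⁻ x, H t x ∂μ := by
      rw [hlc]
      refine mul_le_mul_right (setLIntegral_mono' measurableSet_Ioi ?_) _
      intro t ht
      have hw := weak μ hg (ENNReal.ofReal t)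
      have hsplit : ENNReal.ofReal (t ^ (q-1)) = ENNReal.ofReal t * ENNReal.ofReal (t ^ (q-2)) := by
        rw [← ENNReal.ofReal_mul (le_of_lt ht)]
        congr 1
        rw [show q - 1 = 1 + (q-2) by ring, Real.rpow_add ht, Real.rpow_one]
      have hEt : {a | t < F a} = {a | ENNReal.ofReal t < T a} := hsets t ht
      calc μ {a | t < F a} * ENNReal.ofReal (t ^ (q-1))
          = (ENNReal.ofReal t * μ {x | ENNReal.ofReal t < T x}) * ENNReal.ofReal (t ^ (q-2)) := by
            rw [hEt, hsplit]; ring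
      _ ≤ (∫⁻ x in {x | ENNReal.ofReal t < T x}, g x ∂μ) * ENNReal.ofReal (t ^ (q-2)) :=
            mul_le_mul_left hw _
      _ = ∫⁻ x, H t x ∂μ := by
            rw [hH]
            have : ∀ x, A.indicator (fun _ => (1:ℝ≥0∞)) (t,x) * (g x * ENNReal.ofReal (t ^ (q-2)))
                = {x | ENNReal.ofReal t < T x}.indicator (fun x => g x * ENNReal.ofReal (t ^ (q-2))) x := by
              intro x
              by_cases hx : ENNReal.ofReal t < T x
              · rw [indicator_of_mem (show (t,x) ∈ A from hx), indicator_of_mem (show x ∈ _ from hx), one_mul]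
              · rw [indicator_of_notMem (show (t,x) ∉ A from hx), indicator_of_notMem (show x ∉ _ from hx), zero_mul]
            simp_rw [this]
            have hset : MeasurableSet {x | ENNReal.ofReal t < T x} :=
              measurableSet_lt measurable_const hTm
            rw [lintegral_indicator hset, lintegral_mul_const'' _ hg.aemeasurable.restrict]
    have step2 : ∫⁻ t in Ioi (0:ℝ), ∫⁻ x, H t x ∂μ = ∫⁻ x, ∫⁻ t in Ioi (0:ℝ), H t x ∂volume ∂μ :=
      lintegral_lintegral_swap hHm
    have step3 : ∀ x, ∫⁻ t in Ioi (0:ℝ), H t x ∂volume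
        = g x * ENNReal.ofReal (F x ^ (q-1) / (q-1)) := by
      intro x
      set S : Set ℝ := {t | ENNReal.ofReal t < T x} with hS
      have hSm : MeasurableSet S := measurableSet_lt measurable_id.ennreal_ofReal measurable_const
      have hHind : ∀ t, H t x = S.indicator (fun t => g x * ENNReal.ofReal (t ^ (q-2))) t := by
        intro t
        by_cases ht : ENNReal.ofReal t < T x
        · simp only [hH]
          rw [indicator_of_mem (show (t,x) ∈ A from ht), indicator_of_mem (show t ∈ S from ht), one_mul]
        · simp only [hH]
          rw [indicator_of_notMem (show (t,x) ∉ A from ht), indicator_of_notMem (show t ∉ S from ht), zero_mul]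
      have hSIoi : S ∩ Ioi (0:ℝ) = Ioo 0 (F x) := by
        ext t
        simp only [hS, mem_inter_iff, mem_setOf_eq, mem_Ioi, mem_Ioo, ← hFof x]
        constructor
        · rintro ⟨h1, h2⟩
          exact ⟨h2, (ENNReal.ofReal_lt_ofReal_iff_of_nonneg h2.le).mp h1⟩
        · rintro ⟨h1, h2⟩
          exact ⟨(ENNReal.ofReal_lt_ofReal_iff_of_nonneg h1.le).mpr h2, h1⟩
      calc ∫⁻ t in Ioi (0:ℝ), H t x ∂volume
          = ∫⁻ t in Ioi (0:ℝ), S.indicator (fun t => g x * ENNReal.ofReal (t ^ (q-2))) t ∂volume := by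
            simp_rw [hHind]
      _ = ∫⁻ t in S ∩ Ioi (0:ℝ), g x * ENNReal.ofReal (t ^ (q-2)) ∂volume := by
            rw [lintegral_indicator hSm, Measure.restrict_restrict hSm]
      _ = g x * ∫⁻ t in Ioo (0:ℝ) (F x), ENNReal.ofReal (t ^ (q-2)) ∂volume := by
            rw [hSIoi, lintegral_const_mul' _ _ ((hgc x).trans_lt hc.lt_top).ne]
      _ = g x * ENNReal.ofReal (F x ^ (q-1) / (q-1)) := by
            rw [lintegral_Ioo_rpow (by linarith) toReal_nonneg, show q - 2 + 1 = q - 1 by ring]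
    have step4 : I ≤ ENNReal.ofReal (q/(q-1)) * ∫⁻ x, g x * T x ^ (q-1) ∂μ := by
      have e1 : ∀ x, g x * ENNReal.ofReal (F x ^ (q-1) / (q-1))
          = ENNReal.ofReal (1/(q-1)) * (g x * T x ^ (q-1)) := by
        intro x
        have hq1 : (0:ℝ) < q - 1 := by linarith
        have hFx : (0:ℝ) ≤ F x := toReal_nonneg
        have h0 : F x ^ (q-1) / (q-1) = (1/(q-1)) * F x ^ (q-1) := by ring
        rw [h0, ENNReal.ofReal_mul (by positivity),
          ← ENNReal.ofReal_rpow_of_nonneg hFx (by linarith : (0:ℝ) ≤ q - 1), hFof x]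
        ring
      calc I ≤ ENNReal.ofReal q * ∫⁻ t in Ioi (0:ℝ), ∫⁻ x, H t x ∂μ := step1
      _ = ENNReal.ofReal q * ∫⁻ x, g x * ENNReal.ofReal (F x ^ (q-1) / (q-1)) ∂μ := by
          rw [step2]; congr 1; exact lintegral_congr fun x => step3 x
      _ = ENNReal.ofReal q * (ENNReal.ofReal (1/(q-1)) * ∫⁻ x, g x * T x ^ (q-1) ∂μ) := by
          congr 1
          simp_rw [e1]
          rw [lintegral_const_mul' _ _ ofReal_ne_top]
      _ = ENNReal.ofReal (q/(q-1)) * ∫⁻ x, g x * T x ^ (q-1) ∂μ := by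
          rw [← mul_assoc, ← ENNReal.ofReal_mul hq0.le]
          congr 2
          field_simp
    exact step4
  -- Hölder
  set B := (∫⁻ x, g x ^ q ∂μ) ^ (1/q) with hB
  have hpq : q.HolderConjugate (q/(q-1)) := Real.HolderConjugate.conjExponent hq
  have hhold : ∫⁻ x, g x * T x ^ (q-1) ∂μ ≤ B * I ^ ((q-1)/q) := by
    have h := ENNReal.lintegral_mul_le_Lp_mul_Lq μ hpq hg.aemeasurable
      ((hTm.pow_const (q-1)).aemeasurable)
    have e2 : ∀ x, (T x ^ (q-1)) ^ (q/(q-1)) = T x ^ q := by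
      intro x
      rw [← ENNReal.rpow_mul]
      congr 1
      have hne : q - 1 ≠ 0 := by linarith
      field_simp
    have e3 : 1/(q/(q-1)) = (q-1)/q := by
      field_simp
    calc ∫⁻ x, g x * T x ^ (q-1) ∂μ
        ≤ (∫⁻ x, g x ^ q ∂μ) ^ (1/q) * (∫⁻ x, (T x ^ (q-1)) ^ (q/(q-1)) ∂μ) ^ (1/(q/(q-1))) := h
    _ = B * I ^ ((q-1)/q) := by
        have e4 : (∫⁻ x, (T x ^ (q-1)) ^ (q/(q-1)) ∂μ) = I := lintegral_congr fun x => e2 x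
        rw [e3, e4, hB]
  have hfinal : I ≤ (ENNReal.ofReal (q/(q-1)) * B) * I ^ ((q-1)/q) := by
    calc I ≤ ENNReal.ofReal (q/(q-1)) * ∫⁻ x, g x * T x ^ (q-1) ∂μ := hmain
    _ ≤ ENNReal.ofReal (q/(q-1)) * (B * I ^ ((q-1)/q)) := mul_le_mul_right hhold _
    _ = (ENNReal.ofReal (q/(q-1)) * B) * I ^ ((q-1)/q) := by ring
  rcases eq_or_ne I 0 with hI0 | hI0
  · rw [hI0, ENNReal.zero_rpow_of_pos (by exact div_pos one_pos hq0)]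
    exact zero_le
  have hrne : I ^ ((q-1)/q) ≠ 0 := by
    simp only [ne_eq, ENNReal.rpow_eq_zero_iff, not_or]
    constructor
    · rintro ⟨h1, _⟩; exact hI0 h1
    · rintro ⟨h1, _⟩; exact hIfin h1
  have hrtop : I ^ ((q-1)/q) ≠ ∞ := by
    refine ENNReal.rpow_ne_top_of_nonneg (by apply div_nonneg <;> linarith) hIfin
  have hsplitI : I ^ (1/q) * I ^ ((q-1)/q) = I := by
    rw [← ENNReal.rpow_add _ _ hI0 hIfin]
    rw [show 1/q + (q-1)/q = 1 by field_simp; ring, ENNReal.rpow_one]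
  have : I ^ (1/q) * I ^ ((q-1)/q) ≤ (ENNReal.ofReal (q/(q-1)) * B) * I ^ ((q-1)/q) := by
    rw [hsplitI]; exact hfinal
  exact (ENNReal.mul_le_mul_iff_left hrne hrtop).mp this

lemma dMax_mono (μ : Measure (Rn n)) {g h : Rn n → ℝ≥0∞} (hgh : ∀ x, g x ≤ h x) (x : Rn n) :
    dMax μ g x ≤ dMax μ h x := by
  refine iSup_le fun k => iSup_le fun j => iSup_le fun hx => ?_
  refine le_iSup_of_le k (le_iSup_of_le j (le_iSup_of_le hx ?_))
  exact ENNReal.div_le_div_right (lintegral_mono fun y => hgh y) _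

lemma rpow_iSup (a : ℕ → ℝ≥0∞) {q : ℝ} (hq : 0 < q) : (⨆ m, a m) ^ q = ⨆ m, a m ^ q := by
  refine Monotone.map_iSup_of_continuousAt (f := fun x : ℝ≥0∞ => x ^ q) ?_ ?_ ?_
  · exact ENNReal.continuous_rpow_const.continuousAt
  · exact fun u v huv => ENNReal.rpow_le_rpow huv hq.le
  · exact ENNReal.zero_rpow_of_pos hq

/-- strong type, general case -/
lemma strong (μ : Measure (Rn n)) [SigmaFinite μ] {g : Rn n → ℝ≥0∞} (hg : Measurable g)
    {q : ℝ} (hq : 1 < q) :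
    (∫⁻ x, dMax μ g x ^ q ∂μ) ^ (1/q) ≤
      ENNReal.ofReal (q/(q-1)) * (∫⁻ x, g x ^ q ∂μ) ^ (1/q) := by
  have hq0 : (0:ℝ) < q := by linarith
  set gk : ℕ → Rn n → ℝ≥0∞ :=
    fun m => (spanningSets μ m).indicator (fun x => min (g x) m) with hgk
  have hgkm : ∀ m, Measurable (gk m) :=
    fun m => (hg.min measurable_const).indicator (measurableSet_spanningSets μ m)
  have hgk_le : ∀ m x, gk m x ≤ g x := by
    intro m x
    by_cases hx : x ∈ spanningSets μ m
    · simp only [hgk]; rw [indicator_of_mem hx]; exact min_le_left _ _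
    · simp only [hgk]; rw [indicator_of_notMem hx]; exact zero_le
  have hgk_mono : ∀ x, Monotone (fun m => gk m x) := by
    intro x m l hml
    by_cases hx : x ∈ spanningSets μ m
    · have hx' : x ∈ spanningSets μ l := monotone_spanningSets μ hml hx
      simp only [hgk, indicator_of_mem hx, indicator_of_mem hx']
      exact min_le_min le_rfl (by exact_mod_cast Nat.cast_le.mpr hml)
    · simp only [hgk, indicator_of_notMem hx]
      exact zero_le
  have hgk_sup : ∀ x, (⨆ m, gk m x) = g x := by
    intro x
    refine le_antisymm (iSup_le fun m => hgk_le m x) ?_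
    obtain ⟨k₀, hk₀⟩ : ∃ k₀, x ∈ spanningSets μ k₀ := by
      have := iUnion_spanningSets μ
      have hx : x ∈ ⋃ i, spanningSets μ i := by rw [this]; trivial
      exact mem_iUnion.mp hx
    rcases eq_or_ne (g x) ∞ with hgx | hgx
    · rw [hgx, ← ENNReal.iSup_natCast]
      refine iSup_le fun m => ?_
      refine le_iSup_of_le (max k₀ m) ?_
      have hxm : x ∈ spanningSets μ (max k₀ m) := monotone_spanningSets μ (le_max_left _ _) hk₀
      simp only [hgk, indicator_of_mem hxm, hgx]
      rw [min_eq_right le_top]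
      exact_mod_cast Nat.cast_le.mpr (le_max_right k₀ m)
    · obtain ⟨k₁, hk₁⟩ := ENNReal.exists_nat_gt hgx
      refine le_iSup_of_le (max k₀ k₁) ?_
      have hxm : x ∈ spanningSets μ (max k₀ k₁) := monotone_spanningSets μ (le_max_left _ _) hk₀
      simp only [hgk, indicator_of_mem hxm]
      rw [min_eq_left]
      calc g x ≤ (k₁ : ℝ≥0∞) := hk₁.le
      _ ≤ ((max k₀ k₁ : ℕ) : ℝ≥0∞) := by exact_mod_cast Nat.cast_le.mpr (le_max_right _ _)
  -- dMax sup
  have hdsup : ∀ x, dMax μ g x = ⨆ m, dMax μ (gk m) x := by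
    intro x
    refine le_antisymm ?_ (iSup_le fun m => dMax_mono μ (hgk_le m) x)
    refine iSup_le fun k => iSup_le fun j => iSup_le fun hx => ?_
    have havg : dAvg μ g k j = ⨆ m, dAvg μ (gk m) k j := by
      unfold dAvg
      rw [← ENNReal.iSup_div]
      congr 1
      have : ∀ y, g y = ⨆ m, gk m y := fun y => (hgk_sup y).symm
      calc ∫⁻ y in dyadicCube k j, g y ∂μ = ∫⁻ y in dyadicCube k j, ⨆ m, gk m y ∂μ := by
            exact lintegral_congr fun y => this y
      _ = ⨆ m, ∫⁻ y in dyadicCube k j, gk m y ∂μ := by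
            exact lintegral_iSup (fun m => hgkm m) (fun a b hab y => hgk_mono y hab)
    rw [havg]
    refine iSup_le fun m => ?_
    refine le_iSup_of_le m (le_iSup_of_le k (le_iSup_of_le j (le_iSup_of_le hx le_rfl)))
  -- conclude
  set R := ENNReal.ofReal (q/(q-1)) * (∫⁻ x, g x ^ q ∂μ) ^ (1/q) with hR
  have hbk : ∀ m, ∫⁻ x, dMax μ (gk m) x ^ q ∂μ ≤ R ^ q := by
    intro m
    have hc : (m : ℝ≥0∞) ≠ ∞ := natCast_ne_top m
    have hgc : ∀ x, gk m x ≤ (m : ℝ≥0∞) := by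
      intro x
      by_cases hx : x ∈ spanningSets μ m
      · simp only [hgk, indicator_of_mem hx]; exact min_le_right _ _
      · simp only [hgk, indicator_of_notMem hx]; exact zero_le
    have hgi : ∫⁻ x, gk m x ∂μ ≠ ∞ := by
      refine LT.lt.ne ?_
      calc ∫⁻ x, gk m x ∂μ = ∫⁻ x in spanningSets μ m, min (g x) m ∂μ := by
            simp only [hgk]; rw [lintegral_indicator (measurableSet_spanningSets μ m)]
      _ ≤ ∫⁻ _ in spanningSets μ m, (m : ℝ≥0∞) ∂μ :=
            setLIntegral_mono' (measurableSet_spanningSets μ m) (fun x _ => min_le_right _ _)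
      _ = (m : ℝ≥0∞) * μ (spanningSets μ m) := by rw [setLIntegral_const]
      _ < ∞ := ENNReal.mul_lt_top hc.lt_top (measure_spanningSets_lt_top μ m)
    have h1 := strong_bounded μ (hgkm m) hq hc hgc hgi
    have h2 : (∫⁻ x, gk m x ^ q ∂μ) ^ (1/q) ≤ (∫⁻ x, g x ^ q ∂μ) ^ (1/q) := by
      refine ENNReal.rpow_le_rpow ?_ (by positivity)
      exact lintegral_mono fun x => ENNReal.rpow_le_rpow (hgk_le m x) hq0.le
    have h3 : (∫⁻ x, dMax μ (gk m) x ^ q ∂μ) ^ (1/q) ≤ R :=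
      (h1.trans (mul_le_mul_right h2 _))
    calc ∫⁻ x, dMax μ (gk m) x ^ q ∂μ
        = ((∫⁻ x, dMax μ (gk m) x ^ q ∂μ) ^ (1/q)) ^ q := by
          rw [← ENNReal.rpow_mul, one_div, inv_mul_cancel₀ hq0.ne', ENNReal.rpow_one]
    _ ≤ R ^ q := ENNReal.rpow_le_rpow h3 hq0.le
  have hmono2 : Monotone fun m => fun x => dMax μ (gk m) x ^ q := by
    intro a b hab
    intro x
    exact ENNReal.rpow_le_rpow (dMax_mono μ (fun y => hgk_mono y hab) x) hq0.le
  have hkey : ∫⁻ x, dMax μ g x ^ q ∂μ ≤ R ^ q := by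
    calc ∫⁻ x, dMax μ g x ^ q ∂μ = ∫⁻ x, ⨆ m, dMax μ (gk m) x ^ q ∂μ := by
          refine lintegral_congr fun x => ?_
          rw [hdsup x, rpow_iSup _ hq0]
    _ = ⨆ m, ∫⁻ x, dMax μ (gk m) x ^ q ∂μ := by
          exact lintegral_iSup (fun m => (measurable_dMax μ (gk m)).pow_const q) hmono2
    _ ≤ R ^ q := iSup_le hbk
  calc (∫⁻ x, dMax μ g x ^ q ∂μ) ^ (1/q) ≤ (R ^ q) ^ (1/q) :=
        ENNReal.rpow_le_rpow hkey (by positivity)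
  _ = R := by rw [← ENNReal.rpow_mul, mul_one_div, div_self hq0.ne', ENNReal.rpow_one]

lemma setInt_mul_eq {Q : Set (Rn n)} (hQ : MeasurableSet Q) {σ f : Rn n → ℝ}
    (hσm : Measurable σ) (hf0 : ∀ x, 0 ≤ f x) (hfm : Measurable f) :
    setInt Q (fun x => f x * σ x)
      = ∫⁻ x in Q, ENNReal.ofReal (f x) ∂(volume.withDensity fun x => ENNReal.ofReal (σ x)) := by
  rw [restrict_withDensity hQ,
    lintegral_withDensity_eq_lintegral_mul _ hσm.ennreal_ofReal hfm.ennreal_ofReal]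
  unfold setInt
  refine lintegral_congr fun x => ?_
  simp only [Pi.mul_apply]
  rw [ENNReal.ofReal_mul (hf0 x), mul_comm]

lemma wAvg_eq {σ f : Rn n → ℝ} (hσm : Measurable σ) (hf0 : ∀ x, 0 ≤ f x) (hfm : Measurable f)
    (k : ℤ) (j : Fin n → ℤ) :
    wAvg (dyadicCube k j) σ f
      = dAvg (volume.withDensity fun x => ENNReal.ofReal (σ x))
          (fun x => ENNReal.ofReal (f x)) k j := by
  unfold wAvg dAvg
  rw [setInt_mul_eq measurableSet_dyadicCube hσm hf0 hfm]
  congr 1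
  unfold setInt
  rw [withDensity_apply _ measurableSet_dyadicCube]

lemma Mdw1_eq {σ f : Rn n → ℝ} (hσm : Measurable σ) (hf0 : ∀ x, 0 ≤ f x) (hfm : Measurable f) :
    Mdw1 σ f = dMax (volume.withDensity fun x => ENNReal.ofReal (σ x))
      (fun x => ENNReal.ofReal (f x)) := by
  funext x
  apply le_antisymm
  · refine iSup_le fun Q => iSup_le fun hQ => iSup_le fun hx => ?_
    obtain ⟨k, j, rfl⟩ := hQ
    rw [wAvg_eq hσm hf0 hfm]
    exact le_iSup_of_le k (le_iSup_of_le j (le_iSup_of_le hx le_rfl))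
  · refine iSup_le fun k => iSup_le fun j => iSup_le fun hx => ?_
    rw [← wAvg_eq hσm hf0 hfm]
    exact le_iSup_of_le (dyadicCube k j) (le_iSup_of_le ⟨k, j, rfl⟩ (le_iSup_of_le hx le_rfl))

end Aux

open Aux in
/-- Universal bound `‖𝓜^d_{⃗σ}(⃗f)‖_{L^p(ν_{⃗σ})} ≤ ∏ p_i' ‖f_i‖_{L^{p_i}(σ_i)}`. -/
theorem stmt3 {n m : ℕ} (hm : 0 < m) (p : Fin m → ℝ) (pp : ℝ)
    (hp : ∀ i, 1 < p i) (hpp : 1 / pp = ∑ i, 1 / p i)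
    (σ : Fin m → Rn n → ℝ) (hσ0 : ∀ i x, 0 ≤ σ i x) (hσm : ∀ i, Measurable (σ i))
    (f : Fin m → Rn n → ℝ) (hf0 : ∀ i x, 0 ≤ f i x) (hfm : ∀ i, Measurable (f i)) :
    nLp pp (fun x => ∏ i, σ i x ^ (pp / p i)) (Mdw σ f) ≤
      ∏ i, ENNReal.ofReal (conjExp (p i)) * nLpR (p i) (σ i) (f i) := by
  classical
  have hppos : ∀ i, 0 < p i := fun i => lt_trans one_pos (hp i)
  have hsumpos : 0 < ∑ i, 1 / p i := by
    refine Finset.sum_pos (fun i _ => by have := hppos i; positivity) ?_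
    haveI : Nonempty (Fin m) := Fin.pos_iff_nonempty.mp hm
    exact Finset.univ_nonempty
  have hpp0 : 0 < pp := by
    have h1 : 0 < 1 / pp := hpp ▸ hsumpos
    exact one_div_pos.mp h1
  set μm : Fin m → Measure (Rn n) :=
    (fun i => volume.withDensity fun x => ENNReal.ofReal (σ i x)) with hμm
  set gm : Fin m → Rn n → ℝ≥0∞ := (fun i x => ENNReal.ofReal (f i x)) with hgm
  have hM1 : ∀ i, Mdw1 (σ i) (f i) = dMax (μm i) (gm i) :=
    fun i => Mdw1_eq (hσm i) (hf0 i) (hfm i)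
  have he0 : ∀ i, (0:ℝ) ≤ pp / p i := fun i => le_of_lt (div_pos hpp0 (hppos i))
  have hesum : ∑ i, pp / p i = 1 := by
    have h2 : ∑ i, pp / p i = pp * ∑ i, 1 / p i := by
      rw [Finset.mul_sum]
      exact Finset.sum_congr rfl fun i _ => by rw [mul_one_div]
    rw [h2, ← hpp]
    field_simp
  have hMdw_le : ∀ x, Mdw σ f x ≤ ∏ i, Mdw1 (σ i) (f i) x := by
    intro x
    refine iSup_le fun Q => iSup_le fun hQ => iSup_le fun hx => ?_
    refine Finset.prod_le_prod' fun i _ => ?_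
    exact le_iSup_of_le Q (le_iSup_of_le hQ (le_iSup_of_le hx le_rfl))
  set h : Fin m → Rn n → ℝ≥0∞ :=
    (fun i x => dMax (μm i) (gm i) x ^ (p i) * ENNReal.ofReal (σ i x)) with hh
  have hpt : ∀ x, Mdw σ f x ^ pp * ENNReal.ofReal (∏ i, σ i x ^ (pp / p i))
      ≤ ∏ i, h i x ^ (pp / p i) := by
    intro x
    have h1 : Mdw σ f x ^ pp ≤ ∏ i, dMax (μm i) (gm i) x ^ pp := by
      calc Mdw σ f x ^ pp ≤ (∏ i, Mdw1 (σ i) (f i) x) ^ pp :=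
            ENNReal.rpow_le_rpow (hMdw_le x) hpp0.le
      _ = ∏ i, Mdw1 (σ i) (f i) x ^ pp := (ENNReal.prod_rpow_of_nonneg hpp0.le).symm
      _ = ∏ i, dMax (μm i) (gm i) x ^ pp :=
            Finset.prod_congr rfl fun i _ => by rw [hM1 i]
    have h2 : ENNReal.ofReal (∏ i, σ i x ^ (pp / p i))
        = ∏ i, ENNReal.ofReal (σ i x) ^ (pp / p i) := by
      rw [ENNReal.ofReal_prod_of_nonneg (fun i _ => Real.rpow_nonneg (hσ0 i x) _)]
      exact Finset.prod_congr rfl fun i _ =>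
        (ENNReal.ofReal_rpow_of_nonneg (hσ0 i x) (he0 i)).symm
    calc Mdw σ f x ^ pp * ENNReal.ofReal (∏ i, σ i x ^ (pp / p i))
        ≤ (∏ i, dMax (μm i) (gm i) x ^ pp) * ∏ i, ENNReal.ofReal (σ i x) ^ (pp / p i) := by
          rw [h2]; exact mul_le_mul_left h1 _
    _ = ∏ i, (dMax (μm i) (gm i) x ^ pp * ENNReal.ofReal (σ i x) ^ (pp / p i)) :=
          Finset.prod_mul_distrib.symm
    _ = ∏ i, h i x ^ (pp / p i) := by
          refine Finset.prod_congr rfl fun i _ => ?_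
          simp only [hh]
          rw [ENNReal.mul_rpow_of_nonneg _ _ (he0 i), ← ENNReal.rpow_mul]
          congr 2
          have hpi : p i ≠ 0 := (hppos i).ne'
          field_simp
  have hhm : ∀ i, Measurable (h i) := fun i =>
    ((measurable_dMax _ _).pow_const _).mul (hσm i).ennreal_ofReal
  have hconv : ∀ i, ∫⁻ x, h i x = ∫⁻ x, dMax (μm i) (gm i) x ^ (p i) ∂(μm i) := by
    intro i
    simp only [hμm]
    rw [lintegral_withDensity_eq_lintegral_mul _ (hσm i).ennreal_ofReal
      ((measurable_dMax _ _).pow_const _)]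
    refine lintegral_congr fun x => ?_
    simp only [hh, hμm, Pi.mul_apply]
    exact mul_comm _ _
  have hgq : ∀ i, nLpR (p i) (σ i) (f i) = (∫⁻ x, gm i x ^ (p i) ∂(μm i)) ^ (1 / p i) := by
    intro i
    unfold nLpR nLp
    congr 1
    simp only [hμm]
    rw [lintegral_withDensity_eq_lintegral_mul _ (hσm i).ennreal_ofReal
      ((hfm i).ennreal_ofReal.pow_const _)]
    refine lintegral_congr fun x => ?_
    simp only [hgm, Pi.mul_apply]
    exact mul_comm _ _
  calc nLp pp (fun x => ∏ i, σ i x ^ (pp / p i)) (Mdw σ f)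
      = (∫⁻ x, Mdw σ f x ^ pp * ENNReal.ofReal (∏ i, σ i x ^ (pp / p i))) ^ (1/pp) := rfl
  _ ≤ (∫⁻ x, ∏ i, h i x ^ (pp / p i)) ^ (1/pp) :=
      ENNReal.rpow_le_rpow (lintegral_mono hpt) (by positivity)
  _ ≤ (∏ i, (∫⁻ x, h i x) ^ (pp / p i)) ^ (1/pp) := by
      refine ENNReal.rpow_le_rpow ?_ (by positivity)
      exact ENNReal.lintegral_prod_norm_pow_le _ (fun i _ => (hhm i).aemeasurable) hesum
        (fun i _ => he0 i)
  _ = ∏ i, (∫⁻ x, h i x) ^ (1 / p i) := by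
      rw [← ENNReal.prod_rpow_of_nonneg (show (0:ℝ) ≤ 1/pp by positivity)]
      refine Finset.prod_congr rfl fun i _ => ?_
      rw [← ENNReal.rpow_mul]
      congr 1
      have hpi : p i ≠ 0 := (hppos i).ne'
      have hppne : pp ≠ 0 := hpp0.ne'
      field_simp
  _ ≤ ∏ i, ENNReal.ofReal (conjExp (p i)) * nLpR (p i) (σ i) (f i) := by
      refine Finset.prod_le_prod' fun i _ => ?_
      haveI hSF : SigmaFinite (μm i) := by
        simp only [hμm]; infer_instance
      have hstr := strong (μm i) ((hfm i).ennreal_ofReal : Measurable (gm i)) (hp i)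
      rw [hconv i, hgq i]
      exact hstr
end
end
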